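/- The Airy kernel admits the Christoffel–Darboux type representation: for u ≠ v, ∫_{-∞}^{0} Ai(u-λ) Ai(v-λ) dλ = (Ai(u) Ai'(v) - Ai'(u) Ai(v)) / (u - v). -/

import Mathlib

open scoped ContDiff

/-- Christoffel–Darboux representation of the Airy kernel: for `u ≠ v`,
`∫_{-∞}^0 Ai(u-λ) Ai(v-λ) dλ = (Ai(u) Ai'(v) - Ai'(u) Ai(v)) / (u - v)`. -/
theorem airy_kernel_christoffel_darboux (Ai : ℝ → ℝ) (hsmooth : ContDiff ℝ ⊤ Ai)
    (hODE : ∀ x : ℝ, deriv (deriv Ai) x = x * Ai x)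
    (C : ℝ) (hdecay : ∀ x : ℝ, 0 ≤ x → |Ai x| ≤ C * Real.exp (-x))
    (hdecay' : ∀ x : ℝ, 0 ≤ x → |deriv Ai x| ≤ C * Real.exp (-x))
    (hint : ∀ u v : ℝ,
      MeasureTheory.IntegrableOn (fun lam : ℝ => Ai (u - lam) * Ai (v - lam)) (Set.Iic 0))
    (u v : ℝ) (huv : u ≠ v) :
    ∫ lam in Set.Iic (0 : ℝ), Ai (u - lam) * Ai (v - lam)
      = (Ai u * deriv Ai v - deriv Ai u * Ai v) / (u - v) := by
  have hAi : Differentiable ℝ Ai := hsmooth.differentiable (by simp)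
  have hinf : ContDiff ℝ ∞ Ai := hsmooth.of_le le_top
  have hAi' : Differentiable ℝ (deriv Ai) :=
    ((contDiff_infty_iff_deriv.mp hinf).2).differentiable (by simp)
  have hne : u - v ≠ 0 := sub_ne_zero.mpr huv
  set F : ℝ → ℝ := fun lam =>
    (Ai (u - lam) * deriv Ai (v - lam) - deriv Ai (u - lam) * Ai (v - lam)) / (u - v) with hF
  have hderiv : ∀ lam : ℝ, HasDerivAt F (Ai (u - lam) * Ai (v - lam)) lam := by
    intro lam
    have hu : HasDerivAt (fun x : ℝ => u - x) (-1) lam := (hasDerivAt_id lam).const_sub u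
    have hv : HasDerivAt (fun x : ℝ => v - x) (-1) lam := (hasDerivAt_id lam).const_sub v
    have h1 : HasDerivAt (fun x => Ai (u - x)) (deriv Ai (u - lam) * (-1)) lam :=
      (hAi (u - lam)).hasDerivAt.comp lam hu
    have h2 : HasDerivAt (fun x => Ai (v - x)) (deriv Ai (v - lam) * (-1)) lam :=
      (hAi (v - lam)).hasDerivAt.comp lam hv
    have h3 : HasDerivAt (fun x => deriv Ai (u - x)) (deriv (deriv Ai) (u - lam) * (-1)) lam :=
      (hAi' (u - lam)).hasDerivAt.comp lam hu
    have h4 : HasDerivAt (fun x => deriv Ai (v - x)) (deriv (deriv Ai) (v - lam) * (-1)) lam :=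
      (hAi' (v - lam)).hasDerivAt.comp lam hv
    have h := ((h1.mul h4).sub (h3.mul h2)).div_const (u - v)
    convert h using 1
    case e'_4 => rfl
    case e'_5 => rfl
    case e'_8 => rfl
    rw [hODE, hODE]
    field_simp
    ring
  have htend : Filter.Tendsto F Filter.atBot (nhds 0) := by
    have hb : Filter.Tendsto (fun lam : ℝ =>
        2 * (C * Real.exp (-(u - lam))) * (C * Real.exp (-(v - lam)))) Filter.atBot (nhds 0) := by
      have h1 : Filter.Tendsto (fun lam : ℝ => Real.exp (-(u - lam))) Filter.atBot (nhds 0) := by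
        apply Real.tendsto_exp_atBot.comp
        simpa [neg_sub, sub_eq_add_neg] using
          Filter.tendsto_atBot_add_const_right Filter.atBot (-u) (Filter.tendsto_id (α := ℝ))
      have h2 : Filter.Tendsto (fun lam : ℝ => Real.exp (-(v - lam))) Filter.atBot (nhds 0) := by
        apply Real.tendsto_exp_atBot.comp
        simpa [neg_sub, sub_eq_add_neg] using
          Filter.tendsto_atBot_add_const_right Filter.atBot (-v) (Filter.tendsto_id (α := ℝ))
      have := ((h1.const_mul (2 * C)).mul (h2.const_mul C))
      simpa [mul_assoc, mul_comm, mul_left_comm] using this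
    have hnum : Filter.Tendsto (fun lam : ℝ =>
        Ai (u - lam) * deriv Ai (v - lam) - deriv Ai (u - lam) * Ai (v - lam))
        Filter.atBot (nhds 0) := by
      apply squeeze_zero_norm' _ hb
      filter_upwards [Filter.Iic_mem_atBot (min u v)] with lam hlam
      have hu0 : 0 ≤ u - lam := by
        have := le_trans hlam (min_le_left u v); linarith
      have hv0 : 0 ≤ v - lam := by
        have := le_trans hlam (min_le_right u v); linarith
      have hCe_u : (0:ℝ) ≤ C * Real.exp (-(u - lam)) := le_trans (abs_nonneg _) (hdecay _ hu0)
      have hCe_v : (0:ℝ) ≤ C * Real.exp (-(v - lam)) := le_trans (abs_nonneg _) (hdecay _ hv0)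
      have b1 : |Ai (u - lam) * deriv Ai (v - lam)| ≤
          (C * Real.exp (-(u - lam))) * (C * Real.exp (-(v - lam))) := by
        rw [abs_mul]
        exact mul_le_mul (hdecay _ hu0) (hdecay' _ hv0) (abs_nonneg _) hCe_u
      have b2 : |deriv Ai (u - lam) * Ai (v - lam)| ≤
          (C * Real.exp (-(u - lam))) * (C * Real.exp (-(v - lam))) := by
        rw [abs_mul]
        exact mul_le_mul (hdecay' _ hu0) (hdecay _ hv0) (abs_nonneg _) hCe_u
      calc ‖Ai (u - lam) * deriv Ai (v - lam) - deriv Ai (u - lam) * Ai (v - lam)‖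
          ≤ |Ai (u - lam) * deriv Ai (v - lam)| + |deriv Ai (u - lam) * Ai (v - lam)| :=
            abs_sub _ _
        _ ≤ 2 * (C * Real.exp (-(u - lam))) * (C * Real.exp (-(v - lam))) := by
            nlinarith [b1, b2]
    have := hnum.div_const (u - v)
    simpa using this
  have key := MeasureTheory.integral_Iic_of_hasDerivAt_of_tendsto'
    (a := (0:ℝ)) (f := F) (f' := fun lam => Ai (u - lam) * Ai (v - lam))
    (fun x _ => hderiv x) (hint u v) htend
  rw [key]
  simp [hF]
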